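/- R^{S_4} is a free module of rank two over the subalgebra P ∩ R^{S_4} (the S_4-invariant elements of P) with basis {1, z_1z_2z_3}; that is, R^{S_4} = (P ∩ R^{S_4}) ⊕ (P ∩ R^{S_4})·z_1z_2z_3. In particular, z_1z_2z_3 is S_4-invariant. -/

import Mathlib

noncomputable section

open MvPolynomial

/-- The set of two-element subsets of `{1,2,3,4}` (modelled as non-diagonal unordered
pairs of elements of `Fin 4`), indexing the variables of the polynomial ring `R`. -/
abbrev PairIdx : Type := {p : Sym2 (Fin 4) // ¬ p.IsDiag}

/-- The two-element subset `{i, j}`. -/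
def pr (i j : Fin 4) (h : i ≠ j) : PairIdx := ⟨s(i, j), by simp [Sym2.mk_isDiag_iff, h]⟩

/-- The permutation of two-element subsets induced by a permutation `σ` of `{1,2,3,4}`. -/
def pairPerm (σ : Equiv.Perm (Fin 4)) : Equiv.Perm PairIdx :=
  Equiv.subtypeEquiv
    { toFun := Sym2.map σ
      invFun := Sym2.map σ.symm
      left_inv := fun p => by
        rw [show Sym2.map σ.symm (Sym2.map σ p) = Sym2.map (σ.symm ∘ σ) p by
          rw [Sym2.map_comp]; rfl]
        simp
      right_inv := fun p => by
        rw [show Sym2.map σ (Sym2.map σ.symm p) = Sym2.map (σ ∘ σ.symm) p by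
          rw [Sym2.map_comp]; rfl]
        simp }
    (fun p => not_congr (Sym2.isDiag_map σ.injective).symm)

variable (K : Type*) [Field K]

/-- `R := K[x_{{i,j}}]`, the six-variable polynomial ring on the variables indexed by
the two-element subsets of `{1,2,3,4}`. -/
abbrev R4 : Type _ := MvPolynomial PairIdx K

/-- The action of `σ ∈ S₄` on `R`, `σ · x_{{i,j}} = x_{{σ(i),σ(j)}}`, as a `K`-algebra
homomorphism. -/
def actS4 (σ : Equiv.Perm (Fin 4)) : R4 K →ₐ[K] R4 K := rename (pairPerm σ)

/-- The invariant subalgebra `R^{S₄}`. -/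
def S4Inv : Subalgebra K (R4 K) :=
  ⨅ σ : Equiv.Perm (Fin 4), AlgHom.equalizer (actS4 K σ) (AlgHom.id K (R4 K))

/-- `x₁ = x_{{1,2}} + x_{{3,4}}`, `x₂ = x_{{1,3}} + x_{{2,4}}`, `x₃ = x_{{1,4}} + x_{{2,3}}`
(vertices renamed `1,2,3,4 → 0,1,2,3`). -/
def xg : Fin 3 → R4 K :=
  ![X (pr 0 1 (by decide)) + X (pr 2 3 (by decide)),
    X (pr 0 2 (by decide)) + X (pr 1 3 (by decide)),
    X (pr 0 3 (by decide)) + X (pr 1 2 (by decide))]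

/-- `z₁ = x_{{1,2}} − x_{{3,4}}`, `z₂ = x_{{1,3}} − x_{{2,4}}`, `z₃ = x_{{1,4}} − x_{{2,3}}`. -/
def zg : Fin 3 → R4 K :=
  ![X (pr 0 1 (by decide)) - X (pr 2 3 (by decide)),
    X (pr 0 2 (by decide)) - X (pr 1 3 (by decide)),
    X (pr 0 3 (by decide)) - X (pr 1 2 (by decide))]

/-- `[x^a z^{2b}] := Σ_{i=1}^{3} x_i^a z_i^{2b}`. -/
def pSum (a b : ℕ) : R4 K := ∑ i : Fin 3, xg K i ^ a * zg K i ^ (2 * b)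

/-- The Klein four subgroup `H = {id, (12)(34), (13)(24), (14)(23)}` of `S₄`
(vertices renamed `1,2,3,4 → 0,1,2,3`). -/
def klein : Set (Equiv.Perm (Fin 4)) :=
  {1, Equiv.swap 0 1 * Equiv.swap 2 3, Equiv.swap 0 2 * Equiv.swap 1 3,
    Equiv.swap 0 3 * Equiv.swap 1 2}

/-- The subalgebra `R^H` of `H`-invariants. -/
def HInv : Subalgebra K (R4 K) :=
  ⨅ σ ∈ klein, AlgHom.equalizer (actS4 K σ) (AlgHom.id K (R4 K))

/-- The subalgebra `P = K[x₁, x₂, x₃, z₁², z₂², z₃²]` of `R`. -/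
def Psub : Subalgebra K (R4 K) :=
  Algebra.adjoin K {xg K 0, xg K 1, xg K 2, zg K 0 ^ 2, zg K 1 ^ 2, zg K 2 ^ 2}

/-! ### Auxiliary development -/

/-- The "first" elements of the three complementary pairs of two-element subsets. -/
def pA : Fin 3 → PairIdx := ![pr 0 1 (by decide), pr 0 2 (by decide), pr 0 3 (by decide)]

/-- The "second" elements of the three complementary pairs of two-element subsets. -/
def pB : Fin 3 → PairIdx := ![pr 2 3 (by decide), pr 1 3 (by decide), pr 1 2 (by decide)]

/-- The transposition of variables swapping the two members of the `i`-th complementary pair. -/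
def sw (i : Fin 3) : Equiv.Perm PairIdx := Equiv.swap (pA i) (pB i)

/-- The sign-change `z_i ↦ -z_i` as a variable swap. -/
def tau (i : Fin 3) : R4 K →ₐ[K] R4 K := rename (sw i)

lemma xg_eq (i : Fin 3) : xg K i = X (pA i) + X (pB i) := by fin_cases i <;> rfl

lemma zg_eq (i : Fin 3) : zg K i = X (pA i) - X (pB i) := by fin_cases i <;> rfl

lemma pair_cases : ∀ p : PairIdx,
    p = pA 0 ∨ p = pB 0 ∨ p = pA 1 ∨ p = pB 1 ∨ p = pA 2 ∨ p = pB 2 := by decide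

set_option maxHeartbeats 1000000 in
lemma Dfact : ∀ σ : Equiv.Perm (Fin 4), ∃ π : Equiv.Perm (Fin 3), ∃ s : Fin 3 → Bool,
    ((s 0 != s 1) != s 2) = false ∧
    ∀ i, (pairPerm σ (pA i), pairPerm σ (pB i))
      = if s i then (pB (π i), pA (π i)) else (pA (π i), pB (π i)) := by decide

set_option maxHeartbeats 1000000 in
lemma conjFact : ∀ (σ : Equiv.Perm (Fin 4)) (i : Fin 3), ∃ j,
    pairPerm σ * sw i = sw j * pairPerm σ := by decide

set_option maxHeartbeats 1000000 in
lemma kleinFact : ∀ i j : Fin 3, i ≠ j →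
    ∃ σ : Equiv.Perm (Fin 4), pairPerm σ = sw i * sw j := by decide

lemma tau_tau (i : Fin 3) (x : R4 K) : tau K i (tau K i x) = x := by
  show rename _ (rename _ x) = x
  rw [rename_rename, show (⇑(sw i) ∘ ⇑(sw i)) = id from funext fun p => Equiv.swap_apply_self _ _ _,
    rename_id, AlgHom.id_apply]

lemma tau_C (i : Fin 3) (c : K) : tau K i (C c) = C c := rename_C _ _

lemma mem_S4Inv {f : R4 K} : f ∈ S4Inv K ↔ ∀ σ, actS4 K σ f = f := by
  simp [S4Inv, Algebra.mem_iInf, AlgHom.mem_equalizer]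

lemma actS4_C (σ : Equiv.Perm (Fin 4)) (c : K) : actS4 K σ (C c) = C c := rename_C _ _

lemma tau_eq_of_inv {f : R4 K} (hf : f ∈ S4Inv K) (i j : Fin 3) : tau K i f = tau K j f := by
  rcases eq_or_ne i j with rfl | hij
  · rfl
  · obtain ⟨σ, hσ⟩ := kleinFact i j hij
    have h1 : rename (⇑(pairPerm σ)) f = f := (mem_S4Inv K).1 hf σ
    rw [hσ, Equiv.Perm.coe_mul] at h1
    have h1' : tau K i (tau K j f) = f := by
      show rename _ (rename _ f) = f
      rw [rename_rename]; exact h1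
    conv_lhs => rw [← h1']
    rw [tau_tau]

lemma actS4_tau (σ : Equiv.Perm (Fin 4)) (i : Fin 3) : ∃ j, ∀ x : R4 K,
    actS4 K σ (tau K i x) = tau K j (actS4 K σ x) := by
  obtain ⟨j, hj⟩ := conjFact σ i
  refine ⟨j, fun x => ?_⟩
  show rename _ (rename _ x) = rename _ (rename _ x)
  rw [rename_rename, rename_rename, ← Equiv.Perm.coe_mul, ← Equiv.Perm.coe_mul, hj]

/-- Part 1: `z₁z₂z₃` is `S₄`-invariant. -/
lemma z_mem : zg K 0 * zg K 1 * zg K 2 ∈ S4Inv K := by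
  rw [mem_S4Inv]
  intro σ
  obtain ⟨π, s, hpar, hs⟩ := Dfact σ
  have hz : ∀ i, actS4 K σ (zg K i) = (if s i then (-1 : R4 K) else 1) * zg K (π i) := by
    intro i
    have h := hs i
    show rename (⇑(pairPerm σ)) (zg K i) = _
    rw [zg_eq, map_sub, rename_X, rename_X, zg_eq]
    cases hsi : s i
    · rw [hsi] at h
      rw [if_neg (by decide), Prod.mk.injEq] at h
      rw [if_neg (by decide), h.1, h.2]
      ring
    · rw [hsi] at h
      rw [if_pos (by decide), Prod.mk.injEq] at h
      rw [if_pos (by decide), h.1, h.2]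
      ring
  have hmain : actS4 K σ (zg K 0 * zg K 1 * zg K 2) =
      ((if s 0 then (-1 : R4 K) else 1) * (if s 1 then (-1 : R4 K) else 1) *
        (if s 2 then (-1 : R4 K) else 1)) * (zg K (π 0) * zg K (π 1) * zg K (π 2)) := by
    rw [map_mul, map_mul, hz 0, hz 1, hz 2]; ring
  have hsig : ((if s 0 then (-1 : R4 K) else 1) * (if s 1 then (-1 : R4 K) else 1) *
      (if s 2 then (-1 : R4 K) else 1)) = 1 := by
    cases h0 : s 0 <;> cases h1 : s 1 <;> cases h2 : s 2 <;>
      rw [h0, h1, h2] at hpar <;> simp_all <;> ring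
  have hprod : zg K (π 0) * zg K (π 1) * zg K (π 2) = zg K 0 * zg K 1 * zg K 2 := by
    have h := Equiv.prod_comp π (zg K)
    rw [Fin.prod_univ_three, Fin.prod_univ_three] at h
    exact h
  rw [hmain, hsig, hprod, one_mul]

/-! ### The model polynomial ring in variables `x₁,x₂,x₃,z₁,z₂,z₃` -/

/-- Index type for the model ring: `inl i ↦ xᵢ`, `inr i ↦ zᵢ`. -/
abbrev V6 : Type := Fin 3 ⊕ Fin 3

/-- The model polynomial ring. -/
abbrev YR : Type _ := MvPolynomial V6 K

/-- The substitution `Xₗᵢ ↦ xᵢ`, `Xᵣᵢ ↦ zᵢ`. -/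
def phi : YR K →ₐ[K] R4 K := aeval (Sum.elim (xg K) (zg K))

/-- The sign change `Xᵣᵢ ↦ -Xᵣᵢ` on the model ring. -/
def rho (i : Fin 3) : YR K →ₐ[K] YR K :=
  aeval (fun j => if j = Sum.inr i then - X j else X j)

/-- The inverse substitution on variables. -/
def epsi : PairIdx → YR K := fun p =>
  if p = pA 0 then C 2⁻¹ * (X (Sum.inl 0) + X (Sum.inr 0)) else
  if p = pB 0 then C 2⁻¹ * (X (Sum.inl 0) - X (Sum.inr 0)) else
  if p = pA 1 then C 2⁻¹ * (X (Sum.inl 1) + X (Sum.inr 1)) else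
  if p = pB 1 then C 2⁻¹ * (X (Sum.inl 1) - X (Sum.inr 1)) else
  if p = pA 2 then C 2⁻¹ * (X (Sum.inl 2) + X (Sum.inr 2)) else
              C 2⁻¹ * (X (Sum.inl 2) - X (Sum.inr 2))

/-- The inverse substitution. -/
def psi : R4 K →ₐ[K] YR K := aeval (epsi K)

lemma epsi_pA (i : Fin 3) :
    epsi K (pA i) = C 2⁻¹ * (X (Sum.inl i) + X (Sum.inr i)) := by
  fin_cases i
  · simp only [epsi]; rw [if_pos (by decide)]; rfl
  · simp only [epsi]; rw [if_neg (by decide), if_neg (by decide), if_pos (by decide)]; rfl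
  · simp only [epsi]
    rw [if_neg (by decide), if_neg (by decide), if_neg (by decide), if_neg (by decide),
      if_pos (by decide)]; rfl

lemma epsi_pB (i : Fin 3) :
    epsi K (pB i) = C 2⁻¹ * (X (Sum.inl i) - X (Sum.inr i)) := by
  fin_cases i
  · simp only [epsi]; rw [if_neg (by decide), if_pos (by decide)]; rfl
  · simp only [epsi]
    rw [if_neg (by decide), if_neg (by decide), if_neg (by decide), if_pos (by decide)]; rfl
  · simp only [epsi]
    rw [if_neg (by decide), if_neg (by decide), if_neg (by decide), if_neg (by decide),
      if_neg (by decide)]; rfl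

lemma Chalf {σty : Type} (h2 : (2 : K) ≠ 0) :
    (C (2⁻¹ : K) : MvPolynomial σty K) * 2 = 1 := by
  have h : (C (2 : K) : MvPolynomial σty K) = 2 := by
    rw [show (2:K) = 1 + 1 from (one_add_one_eq_two).symm, C_add, C_1, one_add_one_eq_two]
  rw [← h, ← C_mul, inv_mul_cancel₀ h2, C_1]

lemma psi_X_pA (i : Fin 3) :
    psi K (X (pA i)) = C 2⁻¹ * (X (Sum.inl i) + X (Sum.inr i)) := by
  show aeval (epsi K) (X (pA i)) = _
  rw [aeval_X, epsi_pA]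

lemma psi_X_pB (i : Fin 3) :
    psi K (X (pB i)) = C 2⁻¹ * (X (Sum.inl i) - X (Sum.inr i)) := by
  show aeval (epsi K) (X (pB i)) = _
  rw [aeval_X, epsi_pB]

lemma psi_xg (h2 : (2 : K) ≠ 0) (i : Fin 3) : psi K (xg K i) = X (Sum.inl i) := by
  rw [xg_eq, map_add, psi_X_pA, psi_X_pB]
  linear_combination (X (Sum.inl i) : YR K) * Chalf K h2

lemma psi_zg (h2 : (2 : K) ≠ 0) (i : Fin 3) : psi K (zg K i) = X (Sum.inr i) := by
  rw [zg_eq, map_sub, psi_X_pA, psi_X_pB]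
  linear_combination (X (Sum.inr i) : YR K) * Chalf K h2

lemma phi_X_inl (i : Fin 3) : phi K (X (Sum.inl i)) = xg K i := by
  show aeval (Sum.elim (xg K) (zg K)) (X (Sum.inl i)) = _
  rw [aeval_X, Sum.elim_inl]

lemma phi_X_inr (i : Fin 3) : phi K (X (Sum.inr i)) = zg K i := by
  show aeval (Sum.elim (xg K) (zg K)) (X (Sum.inr i)) = _
  rw [aeval_X, Sum.elim_inr]

lemma phi_psi (h2 : (2 : K) ≠ 0) : (phi K).comp (psi K) = AlgHom.id K (R4 K) := by
  apply algHom_ext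
  intro p
  rw [AlgHom.comp_apply, AlgHom.id_apply]
  rcases pair_cases p with rfl | rfl | rfl | rfl | rfl | rfl <;>
    [rw [psi_X_pA]; rw [psi_X_pB]; rw [psi_X_pA]; rw [psi_X_pB]; rw [psi_X_pA]; rw [psi_X_pB]] <;>
    rw [map_mul, show (phi K) (C (2⁻¹ : K)) = C 2⁻¹ from by
        rw [show (phi K) (C (2⁻¹:K)) = algebraMap K (R4 K) 2⁻¹ from aeval_C _ _, algebraMap_eq]]
  · rw [map_add, phi_X_inl, phi_X_inr, xg_eq, zg_eq]
    linear_combination (X (pA 0) : R4 K) * Chalf K h2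
  · rw [map_sub, phi_X_inl, phi_X_inr, xg_eq, zg_eq]
    linear_combination (X (pB 0) : R4 K) * Chalf K h2
  · rw [map_add, phi_X_inl, phi_X_inr, xg_eq, zg_eq]
    linear_combination (X (pA 1) : R4 K) * Chalf K h2
  · rw [map_sub, phi_X_inl, phi_X_inr, xg_eq, zg_eq]
    linear_combination (X (pB 1) : R4 K) * Chalf K h2
  · rw [map_add, phi_X_inl, phi_X_inr, xg_eq, zg_eq]
    linear_combination (X (pA 2) : R4 K) * Chalf K h2
  · rw [map_sub, phi_X_inl, phi_X_inr, xg_eq, zg_eq]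
    linear_combination (X (pB 2) : R4 K) * Chalf K h2

lemma sw_pA : ∀ i j : Fin 3, sw i (pA j) = if i = j then pB j else pA j := by decide

lemma sw_pB : ∀ i j : Fin 3, sw i (pB j) = if i = j then pA j else pB j := by decide

lemma rho_X (i : Fin 3) (n : V6) :
    rho K i (X n) = if n = Sum.inr i then -X n else X n := aeval_X _ _

lemma tau_X (i : Fin 3) (p' : PairIdx) : tau K i (X p') = X (sw i p') := rename_X _ _

lemma rho_C (i : Fin 3) (c : K) : rho K i (C c) = C c := by
  rw [show rho K i (C c) = algebraMap K (YR K) c from aeval_C _ _, algebraMap_eq]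

lemma psi_tau (i : Fin 3) : (psi K).comp (tau K i) = (rho K i).comp (psi K) := by
  apply algHom_ext
  intro p
  rw [AlgHom.comp_apply, AlgHom.comp_apply]
  rcases pair_cases p with rfl | rfl | rfl | rfl | rfl | rfl <;> fin_cases i <;>
    (try simp [tau_X, sw_pA, sw_pB, psi_X_pA, psi_X_pB, rho_X, rho_C, map_mul, map_add,
      map_sub, mul_add, mul_sub]) <;>
    try ring

lemma rho_monomial (i : Fin 3) (m : V6 →₀ ℕ) (c : K) :
    rho K i (monomial m c) = monomial m ((-1 : K) ^ m (Sum.inr i) * c) := by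
  rw [monomial_eq, monomial_eq, map_mul, rho_C]
  have hprod : (rho K i) (m.prod fun n e => X n ^ e)
      = (m.prod fun n e => (if Sum.inr i = n then (-1 : YR K) ^ e else 1)) *
        m.prod fun n e => (X n : YR K) ^ e := by
    rw [map_finsuppProd, ← Finsupp.prod_mul]
    apply Finsupp.prod_congr
    intro n _
    rw [map_pow, rho_X]
    by_cases hn : n = Sum.inr i
    · rw [if_pos hn, if_pos hn.symm, neg_pow]
    · rw [if_neg hn, if_neg (fun h => hn h.symm), one_mul]
  rw [hprod]
  have hsign : (m.prod fun n e => (if Sum.inr i = n then (-1 : YR K) ^ e else 1))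
      = (-1 : YR K) ^ m (Sum.inr i) := by
    rw [Finsupp.prod_ite_eq]
    by_cases hmem : Sum.inr i ∈ m.support
    · rw [if_pos hmem]
    · rw [if_neg hmem, Finsupp.notMem_support_iff.mp hmem, pow_zero]
  rw [hsign, C_mul, map_pow, map_neg, C_1]
  ring

lemma coeff_rho (i : Fin 3) (u : YR K) (m : V6 →₀ ℕ) :
    coeff m (rho K i u) = (-1 : K) ^ m (Sum.inr i) * coeff m u := by
  conv_lhs => rw [u.as_sum]
  rw [map_sum, coeff_sum]
  simp_rw [rho_monomial, coeff_monomial]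
  rw [Finset.sum_ite_eq' u.support m fun v => (-1 : K) ^ v (Sum.inr i) * coeff v u]
  by_cases h : m ∈ u.support
  · rw [if_pos h]
  · rw [if_neg h, MvPolynomial.notMem_support_iff.mp h, mul_zero]

lemma even_support_of_rho_fixed {u : YR K} (h2 : (2 : K) ≠ 0) (i : Fin 3)
    (hu : rho K i u = u) {m : V6 →₀ ℕ} (hm : m ∈ u.support) : Even (m (Sum.inr i)) := by
  by_contra hodd
  have h := coeff_rho K i u m
  rw [hu, Odd.neg_one_pow (Nat.not_even_iff_odd.mp hodd)] at h
  have h2c : (2 : K) * coeff m u = 0 := by linear_combination h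
  rcases mul_eq_zero.mp h2c with h' | h'
  · exact h2 h'
  · exact MvPolynomial.mem_support_iff.mp hm h'

lemma odd_support_of_rho_neg {u : YR K} (h2 : (2 : K) ≠ 0) (i : Fin 3)
    (hu : rho K i u = -u) {m : V6 →₀ ℕ} (hm : m ∈ u.support) : Odd (m (Sum.inr i)) := by
  rw [← Nat.not_even_iff_odd]
  intro heven
  have h := coeff_rho K i u m
  rw [hu, Even.neg_one_pow heven, one_mul, coeff_neg] at h
  have h2c : (2 : K) * coeff m u = 0 := by linear_combination -h
  rcases mul_eq_zero.mp h2c with h' | h'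
  · exact h2 h'
  · exact MvPolynomial.mem_support_iff.mp hm h'

/-- The model of `P`: the subalgebra generated by the `x`-variables and the squares of
the `z`-variables. -/
def adjoinEven : Subalgebra K (YR K) :=
  Algebra.adjoin K ((Set.range fun i : Fin 3 => (X (Sum.inl i) : YR K)) ∪
    (Set.range fun i : Fin 3 => (X (Sum.inr i) : YR K) ^ 2))

lemma Xl_mem (i : Fin 3) : (X (Sum.inl i) : YR K) ∈ adjoinEven K :=
  Algebra.subset_adjoin (Set.mem_union_left _ ⟨i, rfl⟩)

lemma Xr2_mem (i : Fin 3) : (X (Sum.inr i) : YR K) ^ 2 ∈ adjoinEven K :=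
  Algebra.subset_adjoin (Set.mem_union_right _ ⟨i, rfl⟩)

lemma monomial_mem_adjoinEven (m : V6 →₀ ℕ) (c : K) (h : ∀ i, Even (m (Sum.inr i))) :
    monomial m c ∈ adjoinEven K := by
  rw [monomial_eq]
  apply mul_mem
  · rw [← algebraMap_eq]
    exact Subalgebra.algebraMap_mem _ _
  · rw [Finsupp.prod_fintype _ _ fun j => pow_zero _, Fintype.prod_sum_type]
    apply mul_mem
    · apply Subalgebra.prod_mem
      intro i _
      exact (adjoinEven K).pow_mem (Xl_mem K i) _
    · apply Subalgebra.prod_mem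
      intro i _
      obtain ⟨k, hk⟩ := h i
      rw [show m (Sum.inr i) = 2 * k from by omega, pow_mul]
      exact (adjoinEven K).pow_mem (Xr2_mem K i) _

lemma mem_adjoinEven_of_even {u : YR K}
    (h : ∀ m ∈ u.support, ∀ i, Even (m (Sum.inr i))) : u ∈ adjoinEven K := by
  have hu : u = ∑ v ∈ u.support, monomial v (coeff v u) := u.as_sum
  rw [hu]
  apply Subalgebra.sum_mem
  intro v hv
  exact monomial_mem_adjoinEven K v _ (h v hv)

lemma even_of_mem_adjoinEven {u : YR K} (hu : u ∈ adjoinEven K) :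
    ∀ m ∈ u.support, ∀ i, Even (m (Sum.inr i)) := by
  classical
  refine Algebra.adjoin_induction ?_ ?_ ?_ ?_ hu
  · rintro x (⟨i, rfl⟩ | ⟨i, rfl⟩) m hm j <;> dsimp only at hm
    · rw [support_X, Finset.mem_singleton] at hm
      subst hm
      simp [Finsupp.single_apply]
    · rw [X_pow_eq_monomial, support_monomial, if_neg one_ne_zero,
        Finset.mem_singleton] at hm
      subst hm
      rw [Finsupp.single_apply]
      split_ifs
      · exact ⟨1, rfl⟩
      · exact ⟨0, rfl⟩
  · intro r m hm j
    rw [algebraMap_eq, C_apply] at hm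
    rcases eq_or_ne r 0 with rfl | hr
    · rw [support_monomial, if_pos rfl] at hm
      exact absurd hm (Finset.notMem_empty m)
    · rw [support_monomial, if_neg hr, Finset.mem_singleton] at hm
      subst hm
      exact ⟨0, rfl⟩
  · intro x y _ _ hx hy m hm j
    rcases Finset.mem_union.mp (MvPolynomial.support_add hm) with h' | h'
    · exact hx m h' j
    · exact hy m h' j
  · intro x y _ _ hx hy m hm j
    obtain ⟨a, ha, b, hb, hab⟩ := Finset.mem_add.mp (MvPolynomial.support_mul _ _ hm)
    subst hab
    rw [Finsupp.add_apply]
    exact (hx a ha j).add (hy b hb j)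

/-- The exponent vector of `z₁z₂z₃`. -/
def delta : V6 →₀ ℕ :=
  Finsupp.single (Sum.inr 0) 1 + Finsupp.single (Sum.inr 1) 1 + Finsupp.single (Sum.inr 2) 1

lemma delta_inr (i : Fin 3) : delta (Sum.inr i) = 1 := by
  fin_cases i <;> simp [delta, Finsupp.single_apply]

lemma delta_inl (i : Fin 3) : delta (Sum.inl i) = 0 := by
  simp [delta, Finsupp.single_apply]

lemma monomial_delta :
    (monomial delta 1 : YR K) = X (Sum.inr 0) * X (Sum.inr 1) * X (Sum.inr 2) := by
  rw [delta, X, X, X, monomial_mul, monomial_mul, one_mul, one_mul]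

lemma odd_decomp {u : YR K} (h : ∀ m ∈ u.support, ∀ i, Odd (m (Sum.inr i))) :
    ∃ q ∈ adjoinEven K, u = monomial delta 1 * q := by
  classical
  refine ⟨∑ m ∈ u.support, monomial (m - delta) (coeff m u), ?_, ?_⟩
  · apply Subalgebra.sum_mem
    intro m hm
    apply monomial_mem_adjoinEven
    intro i
    rw [Finsupp.tsub_apply, delta_inr]
    exact Nat.Odd.sub_odd (h m hm i) odd_one
  · rw [Finset.mul_sum]
    conv_lhs => rw [u.as_sum]
    apply Finset.sum_congr rfl
    intro m hm
    rw [monomial_mul, one_mul]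
    congr 1
    rw [add_tsub_cancel_of_le]
    rw [Finsupp.le_def]
    intro j
    cases j with
    | inl i => rw [delta_inl]; exact Nat.zero_le _
    | inr i => rw [delta_inr]; exact (h m hm i).pos

lemma unique_core {p' q' : YR K}
    (hp : ∀ m ∈ p'.support, ∀ i, Even (m (Sum.inr i)))
    (hq : ∀ m ∈ q'.support, ∀ i, Even (m (Sum.inr i)))
    (h : p' + q' * monomial delta 1 = 0) : p' = 0 ∧ q' = 0 := by
  classical
  have hp0 : p' = 0 := by
    by_contra hne
    obtain ⟨m, hm⟩ := MvPolynomial.ne_zero_iff.mp hne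
    have hmem : m ∈ p'.support := MvPolynomial.mem_support_iff.mpr hm
    have heven := hp m hmem 0
    have hq' : coeff m (q' * monomial delta 1) ≠ 0 := by
      have hc := congrArg (coeff m) h
      rw [coeff_add, coeff_zero] at hc
      intro h0
      rw [h0, add_zero] at hc
      exact hm hc
    have hmem2 : m ∈ (q' * monomial delta 1).support := MvPolynomial.mem_support_iff.mpr hq'
    obtain ⟨a, ha, b, hb, hab⟩ := Finset.mem_add.mp (MvPolynomial.support_mul _ _ hmem2)
    rw [support_monomial, if_neg one_ne_zero, Finset.mem_singleton] at hb
    subst hb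
    subst hab
    rw [Finsupp.add_apply, delta_inr] at heven
    exact (Nat.even_add_one.mp heven) (hq a ha 0)
  refine ⟨hp0, ?_⟩
  rw [hp0, zero_add] at h
  rcases mul_eq_zero.mp h with h' | h'
  · exact h'
  · exact absurd (MvPolynomial.monomial_eq_zero.mp h') one_ne_zero

lemma psi_mem_adjoinEven (h2 : (2 : K) ≠ 0) {u : R4 K} (hu : u ∈ Psub K) :
    psi K u ∈ adjoinEven K := by
  have hle : Psub K ≤ (adjoinEven K).comap (psi K) := by
    apply Algebra.adjoin_le
    intro x hx
    simp only [Set.mem_insert_iff, Set.mem_singleton_iff] at hx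
    rcases hx with rfl | rfl | rfl | rfl | rfl | rfl <;>
      rw [SetLike.mem_coe, Subalgebra.mem_comap] <;>
      (try simp only [map_pow, psi_xg K h2, psi_zg K h2]) <;>
      first
        | exact Xl_mem K _
        | exact Xr2_mem K _
  exact hle hu

lemma phi_mem_Psub {u : YR K} (hu : u ∈ adjoinEven K) : phi K u ∈ Psub K := by
  have hle : adjoinEven K ≤ (Psub K).comap (phi K) := by
    apply Algebra.adjoin_le
    rintro x (⟨i, rfl⟩ | ⟨i, rfl⟩) <;>
        rw [SetLike.mem_coe, Subalgebra.mem_comap] <;>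
        (try simp only [map_pow, phi_X_inl, phi_X_inr]) <;>
        apply Algebra.subset_adjoin <;>
        fin_cases i
    · exact Or.inl rfl
    · exact Or.inr (Or.inl rfl)
    · exact Or.inr (Or.inr (Or.inl rfl))
    · exact Or.inr (Or.inr (Or.inr (Or.inl rfl)))
    · exact Or.inr (Or.inr (Or.inr (Or.inr (Or.inl rfl))))
    · exact Or.inr (Or.inr (Or.inr (Or.inr (Or.inr rfl))))
  exact hle hu

lemma phi_monomial_delta : phi K (monomial delta 1) = zg K 0 * zg K 1 * zg K 2 := by
  rw [monomial_delta, map_mul, map_mul, phi_X_inr, phi_X_inr, phi_X_inr]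

/-- Let `K` be a field of characteristic `0` or `> 3`.  Then `R^{S₄}`
is a free module of rank two over the subalgebra `P ∩ R^{S₄}` with basis
`{1, z₁z₂z₃}`, i.e. `R^{S₄} = (P ∩ R^{S₄}) ⊕ (P ∩ R^{S₄})·z₁z₂z₃`: every element of
`R^{S₄}` is `p + q·z₁z₂z₃` with `p, q ∈ P ∩ R^{S₄}`, and such a representation is
unique.  In particular, `z₁z₂z₃` is `S₄`-invariant. -/
theorem S4Inv_free_rank_two_over_PS4
    (hchar : ringChar K = 0 ∨ 3 < ringChar K) :
    zg K 0 * zg K 1 * zg K 2 ∈ S4Inv K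
    ∧ (∀ f ∈ S4Inv K,
        ∃ p ∈ Psub K ⊓ S4Inv K, ∃ q ∈ Psub K ⊓ S4Inv K,
          f = p + q * (zg K 0 * zg K 1 * zg K 2))
    ∧ (∀ p ∈ Psub K ⊓ S4Inv K, ∀ q ∈ Psub K ⊓ S4Inv K,
        p + q * (zg K 0 * zg K 1 * zg K 2) = 0 → p = 0 ∧ q = 0) := by
  have h2 : (2 : K) ≠ 0 := by
    intro h
    haveI := ringChar.charP K
    have hd : ringChar K ∣ 2 :=
      (CharP.cast_eq_zero_iff K (ringChar K) 2).mp (by exact_mod_cast h)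
    rcases hchar with h0 | h3
    · rw [h0] at hd
      exact absurd (Nat.eq_zero_of_zero_dvd hd) (by norm_num)
    · have := Nat.le_of_dvd (by norm_num) hd
      omega
  have hzsig : zg K 0 * zg K 1 * zg K 2 ∈ S4Inv K := z_mem K
  have hpsiz : psi K (zg K 0 * zg K 1 * zg K 2) = monomial delta 1 := by
    rw [map_mul, map_mul, psi_zg K h2, psi_zg K h2, psi_zg K h2, monomial_delta]
  have hzne : zg K 0 * zg K 1 * zg K 2 ≠ 0 := by
    intro h0
    have h1 := congrArg (psi K) h0
    rw [hpsiz, map_zero] at h1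
    exact one_ne_zero (MvPolynomial.monomial_eq_zero.mp h1)
  have hphipsi := phi_psi K h2
  refine ⟨hzsig, ?_, ?_⟩
  · intro f hf
    have hfσ : ∀ σ, actS4 K σ f = f := (mem_S4Inv K).mp hf
    have htf : ∀ i, tau K i f = tau K 0 f := fun i => tau_eq_of_inv K hf i 0
    have htg : ∀ i, tau K i (tau K 0 f) = f := fun i => by rw [← htf i, tau_tau]
    have hgσ : ∀ σ, actS4 K σ (tau K 0 f) = tau K 0 f := by
      intro σ
      obtain ⟨j, hj⟩ := actS4_tau K σ 0
      rw [hj f, hfσ σ, htf j]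
    have htp : ∀ i, tau K i (C (2⁻¹ : K) * (f + tau K 0 f))
        = C (2⁻¹ : K) * (f + tau K 0 f) := by
      intro i
      rw [map_mul, tau_C, map_add, htf i, htg i, add_comm]
    have hth : ∀ i, tau K i (C (2⁻¹ : K) * (f - tau K 0 f))
        = -(C (2⁻¹ : K) * (f - tau K 0 f)) := by
      intro i
      rw [map_mul, tau_C, map_sub, htf i, htg i]
      ring
    have hrp : ∀ i, rho K i (psi K (C (2⁻¹ : K) * (f + tau K 0 f)))
        = psi K (C (2⁻¹ : K) * (f + tau K 0 f)) := by
      intro i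
      rw [← AlgHom.comp_apply, ← psi_tau K i, AlgHom.comp_apply, htp i]
    have hrh : ∀ i, rho K i (psi K (C (2⁻¹ : K) * (f - tau K 0 f)))
        = -(psi K (C (2⁻¹ : K) * (f - tau K 0 f))) := by
      intro i
      rw [← AlgHom.comp_apply, ← psi_tau K i, AlgHom.comp_apply, hth i, map_neg]
    have hpP : C (2⁻¹ : K) * (f + tau K 0 f) ∈ Psub K := by
      have hmem := mem_adjoinEven_of_even K
        (u := psi K (C (2⁻¹ : K) * (f + tau K 0 f)))
        (fun m hm i => even_support_of_rho_fixed K h2 i (hrp i) hm)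
      have h3 := phi_mem_Psub K hmem
      rwa [← AlgHom.comp_apply, hphipsi, AlgHom.id_apply] at h3
    obtain ⟨q', hq'mem, hq'eq⟩ := odd_decomp K
      (u := psi K (C (2⁻¹ : K) * (f - tau K 0 f)))
      (fun m hm i => odd_support_of_rho_neg K h2 i (hrh i) hm)
    have hh_eq : C (2⁻¹ : K) * (f - tau K 0 f)
        = (zg K 0 * zg K 1 * zg K 2) * phi K q' := by
      have h4 := congrArg (phi K) hq'eq
      rw [← AlgHom.comp_apply, hphipsi, AlgHom.id_apply, map_mul, phi_monomial_delta] at h4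
      exact h4
    have hpσ : ∀ σ, actS4 K σ (C (2⁻¹ : K) * (f + tau K 0 f))
        = C (2⁻¹ : K) * (f + tau K 0 f) := by
      intro σ
      rw [map_mul, actS4_C, map_add, hfσ, hgσ]
    have hhσ : ∀ σ, actS4 K σ (C (2⁻¹ : K) * (f - tau K 0 f))
        = C (2⁻¹ : K) * (f - tau K 0 f) := by
      intro σ
      rw [map_mul, actS4_C, map_sub, hfσ, hgσ]
    have hqσ : ∀ σ, actS4 K σ (phi K q') = phi K q' := by
      intro σ
      have h1 : actS4 K σ ((zg K 0 * zg K 1 * zg K 2) * phi K q')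
          = (zg K 0 * zg K 1 * zg K 2) * phi K q' := by
        rw [← hh_eq, hhσ]
      rw [map_mul, (mem_S4Inv K).mp hzsig σ] at h1
      have hc : actS4 K σ (phi K q') * (zg K 0 * zg K 1 * zg K 2)
          = phi K q' * (zg K 0 * zg K 1 * zg K 2) := by
        linear_combination h1
      exact mul_right_cancel₀ hzne hc
    refine ⟨C (2⁻¹ : K) * (f + tau K 0 f),
      Algebra.mem_inf.mpr ⟨hpP, (mem_S4Inv K).mpr hpσ⟩,
      phi K q',
      Algebra.mem_inf.mpr ⟨phi_mem_Psub K hq'mem, (mem_S4Inv K).mpr hqσ⟩, ?_⟩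
    have h5 : phi K q' * (zg K 0 * zg K 1 * zg K 2)
        = C (2⁻¹ : K) * (f - tau K 0 f) := by
      rw [hh_eq]; ring
    rw [h5]
    linear_combination (-f) * Chalf K (σty := PairIdx) h2
  · intro p hp q hq heq
    have hpP := (Algebra.mem_inf.mp hp).1
    have hqP := (Algebra.mem_inf.mp hq).1
    have hpsi := congrArg (psi K) heq
    rw [map_add, map_mul, hpsiz, map_zero] at hpsi
    obtain ⟨hps, hqs⟩ := unique_core K
      (even_of_mem_adjoinEven K (psi_mem_adjoinEven K h2 hpP))
      (even_of_mem_adjoinEven K (psi_mem_adjoinEven K h2 hqP)) hpsi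
    constructor
    · have h6 := congrArg (phi K) hps
      rwa [← AlgHom.comp_apply, hphipsi, AlgHom.id_apply, map_zero] at h6
    · have h6 := congrArg (phi K) hqs
      rwa [← AlgHom.comp_apply, hphipsi, AlgHom.id_apply, map_zero] at h6
end
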